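/- Let f be a polynomial vector field and p a polynomial on ℝ^n. Define the pointwise rank γ_{p,f}(x) as the least k with L^k_f p(x) ≠ 0, and γ_{p,f}(x) = ∞ if no such k exists. Then there exists an integer N such that for all x ∈ ℝ^n, if γ_{p,f}(x) < ∞ then γ_{p,f}(x) ≤ N. (Rank Theorem.) -/
import Mathlib


open MvPolynomial

/-- The Lie derivative of a polynomial `p` along the polynomial vector field `f`:
`⟨∇p, f⟩ = ∑ j, (∂p/∂x_j) * f_j`. -/
noncomputable def lieDeriv {n : ℕ} (f : Fin n → MvPolynomial (Fin n) ℝ)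
    (p : MvPolynomial (Fin n) ℝ) : MvPolynomial (Fin n) ℝ :=
  ∑ j, MvPolynomial.pderiv j p * f j

/-- Iterated Lie derivatives: `lieIter f k p = L^k_f p`. -/
noncomputable def lieIter {n : ℕ} (f : Fin n → MvPolynomial (Fin n) ℝ)
    (k : ℕ) (p : MvPolynomial (Fin n) ℝ) : MvPolynomial (Fin n) ℝ :=
  match k with
  | 0 => p
  | k + 1 => lieDeriv f (lieIter f k p)

/-- **Rank Theorem**: there is a uniform bound `N` such that whenever the pointwise
rank `γ_{p,f}(x)` (the least `k` with `L^k_f p(x) ≠ 0`) is finite, it is at most `N`.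
Finiteness of the rank at `x` is expressed as `∃ k, L^k_f p(x) ≠ 0`, and `γ ≤ N`
as `∃ j ≤ N, L^j_f p(x) ≠ 0` (since `γ` is the least such index). -/
theorem rank_theorem
    {n : ℕ} (f : Fin n → MvPolynomial (Fin n) ℝ) (p : MvPolynomial (Fin n) ℝ) :
    ∃ N : ℕ, ∀ x : Fin n → ℝ,
      (∃ k : ℕ, MvPolynomial.eval x (lieIter f k p) ≠ 0) →
      ∃ j ≤ N, MvPolynomial.eval x (lieIter f j p) ≠ 0 := by
  -- chain of ideals
  let I : ℕ →o Ideal (MvPolynomial (Fin n) ℝ) :=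
    ⟨fun m => Ideal.span ((fun k => lieIter f k p) '' {k | k ≤ m}),
     fun a b hab => Ideal.span_mono (Set.image_mono fun k hk => le_trans hk hab)⟩
  obtain ⟨N, hN⟩ := (monotone_stabilizes_iff_noetherian.mpr inferInstance) I
  refine ⟨N, fun x ⟨k, hk⟩ => ?_⟩
  by_contra h
  push_neg at h
  -- eval at x vanishes on I N, hence on I k = I N for k ≥ N, so at lieIter f k p
  have hmemk : lieIter f k p ∈ I k := Ideal.subset_span ⟨k, le_refl k, rfl⟩
  have hmem : lieIter f k p ∈ I N := by
    rcases le_total k N with hkN | hNk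
    · exact I.monotone hkN hmemk
    · rwa [← hN k hNk] at *
  have hvanish : I N ≤ RingHom.ker (MvPolynomial.eval x) := by
    show Ideal.span _ ≤ _
    rw [Ideal.span_le]
    rintro q ⟨j, hj, rfl⟩
    exact h j hj
  exact hk (hvanish hmem)
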